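/- Let f : ℝⁿ → ℝ and F : ℝⁿ → ℝᵐ be continuously differentiable, ρ > 0, and let (x_k)_{k≥0} ⊂ ℝⁿ, (λ_k)_{k≥0} ⊂ ℝᵐ, (γ_k)_{k≥1} ⊂ ℝ with γ_k ≥ γ̲ > 0, and constants Γ ≥ 0, L̄ ∈ ℝ be such that, with P_k = L_ρ(x_k,λ_k) + (γ_k/2)‖x_k−x_{k−1}‖²: (i) P_{k+1} − P_k ≤ −(γ_{k+1}/4)‖x_{k+1}−x_k‖² − (γ_k/4)‖x_k−x_{k−1}‖² for all k ≥ 1; (ii) P_k ≥ L̄ − 1 for all k ≥ 1; (iii) ‖∇L_ρ(x_k,λ_k)‖ ≤ Γ(‖x_k−x_{k−1}‖ + ‖x_{k−1}−x_{k−2}‖) for all k ≥ 2. Then ‖x_k − x_{k−1}‖ → 0 as k → ∞, and any limit point (x*,λ*) of the sequence ((x_k,λ_k))_{k≥1} satisfies ∇f(x*) + F'(x*)ᵀλ* = 0 and F(x*) = 0, i.e. is a first-order (stationary) point of the problem min f(x) s.t. F(x) = 0. -/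

import Mathlib

open scoped RealInnerProductSpace

/-- Global asymptotic convergence: under the decrease and lower boundedness of the
Lyapunov function `P_k` and the gradient bound on `∇L_ρ`, the primal increments
vanish and every limit point `(x*,λ*)` of the iterates is a stationary point,
i.e. `∇f(x*) + F'(x*)ᵀλ* = 0` and `F(x*) = 0`. -/
theorem stmt_8 (n m : ℕ)
    (f : EuclideanSpace ℝ (Fin n) → ℝ)
    (F : EuclideanSpace ℝ (Fin n) → EuclideanSpace ℝ (Fin m))
    (hf : ContDiff ℝ 1 f) (hF : ContDiff ℝ 1 F)
    (ρ : ℝ) (hρ : 0 < ρ)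
    (x : ℕ → EuclideanSpace ℝ (Fin n)) (lam : ℕ → EuclideanSpace ℝ (Fin m))
    (γ : ℕ → ℝ) (γlow : ℝ) (hγlow : 0 < γlow) (hγ : ∀ k ≥ 1, γlow ≤ γ k)
    (Γ : ℝ) (hΓ : 0 ≤ Γ) (Lbar : ℝ)
    (hdecrease : ∀ k ≥ 1,
      (f (x (k + 1)) + ⟪lam (k + 1), F (x (k + 1))⟫ + ρ / 2 * ‖F (x (k + 1))‖ ^ 2 +
          γ (k + 1) / 2 * ‖x (k + 1) - x k‖ ^ 2) -
        (f (x k) + ⟪lam k, F (x k)⟫ + ρ / 2 * ‖F (x k)‖ ^ 2 +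
          γ k / 2 * ‖x k - x (k - 1)‖ ^ 2) ≤
        -(γ (k + 1) / 4) * ‖x (k + 1) - x k‖ ^ 2 - γ k / 4 * ‖x k - x (k - 1)‖ ^ 2)
    (hbelow : ∀ k ≥ 1,
      Lbar - 1 ≤ f (x k) + ⟪lam k, F (x k)⟫ + ρ / 2 * ‖F (x k)‖ ^ 2 +
        γ k / 2 * ‖x k - x (k - 1)‖ ^ 2)
    (hgradbound : ∀ k ≥ 2,
      Real.sqrt
          (‖gradient f (x k) + ContinuousLinearMap.adjoint (fderiv ℝ F (x k))
              (lam k + ρ • F (x k))‖ ^ 2 + ‖F (x k)‖ ^ 2) ≤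
        Γ * (‖x k - x (k - 1)‖ + ‖x (k - 1) - x (k - 2)‖)) :
    Filter.Tendsto (fun k => ‖x k - x (k - 1)‖) Filter.atTop (nhds 0) ∧
    ∀ (xs : EuclideanSpace ℝ (Fin n)) (lams : EuclideanSpace ℝ (Fin m)),
      (∃ φ : ℕ → ℕ, StrictMono φ ∧ (∀ k, 1 ≤ φ k) ∧
        Filter.Tendsto (fun k => (x (φ k), lam (φ k))) Filter.atTop (nhds (xs, lams))) →
      gradient f xs + ContinuousLinearMap.adjoint (fderiv ℝ F xs) lams = 0 ∧
        F xs = 0 := by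
  set Δ : ℕ → ℝ := fun k => ‖x k - x (k - 1)‖ with hΔdef
  set P : ℕ → ℝ := fun k => f (x k) + ⟪lam k, F (x k)⟫ + ρ / 2 * ‖F (x k)‖ ^ 2 +
      γ k / 2 * ‖x k - x (k - 1)‖ ^ 2 with hPdef
  have hΔnonneg : ∀ k, 0 ≤ Δ k := fun k => norm_nonneg _
  have hdec : ∀ k ≥ 1,
      P (k + 1) ≤ P k - γ (k + 1) / 4 * Δ (k + 1) ^ 2 - γ k / 4 * Δ k ^ 2 := by
    intro k hk
    have h := hdecrease k hk
    have e1 : Δ (k + 1) = ‖x (k + 1) - x k‖ := rfl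
    simp only [hPdef, hΔdef, e1]
    simp only [Nat.add_sub_cancel]
    nlinarith [h]
  -- the Lyapunov sequence shifted by one is antitone and bounded below
  set Q : ℕ → ℝ := fun k => P (k + 1) with hQdef
  have hQanti : Antitone Q := by
    refine antitone_nat_of_succ_le fun k => ?_
    have h := hdec (k + 1) (by omega)
    have h1 : 0 ≤ γ (k + 1 + 1) / 4 * Δ (k + 1 + 1) ^ 2 := by
      have := (hγlow.trans_le (hγ (k + 1 + 1) (by omega))).le
      positivity
    have h2 : 0 ≤ γ (k + 1) / 4 * Δ (k + 1) ^ 2 := by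
      have := (hγlow.trans_le (hγ (k + 1) (by omega))).le
      positivity
    show P (k + 1 + 1) ≤ P (k + 1)
    clear_value Δ P
    linarith
  have hQbdd : ∀ k, Lbar - 1 ≤ Q k := fun k => hbelow (k + 1) (by omega)
  have hQlim : Filter.Tendsto Q Filter.atTop (nhds (⨅ k, Q k)) :=
    tendsto_atTop_ciInf hQanti ⟨Lbar - 1, by rintro y ⟨k, rfl⟩; exact hQbdd k⟩
  have hQshift : Filter.Tendsto (fun k => Q (k + 1)) Filter.atTop (nhds (⨅ k, Q k)) :=
    hQlim.comp (Filter.tendsto_add_atTop_nat 1)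
  have hDlim : Filter.Tendsto (fun k => Q k - Q (k + 1)) Filter.atTop (nhds 0) := by
    have := hQlim.sub hQshift
    simpa using this
  -- squared increments go to zero
  have hsq : Filter.Tendsto (fun k => Δ (k + 1) ^ 2) Filter.atTop (nhds 0) := by
    have hbd : ∀ k, Δ (k + 1) ^ 2 ≤ 4 / γlow * (Q k - Q (k + 1)) := by
      intro k
      have h := hdec (k + 1) (by omega)
      have h1 : 0 ≤ γ (k + 1 + 1) / 4 * Δ (k + 1 + 1) ^ 2 := by
        have := (hγlow.trans_le (hγ (k + 1 + 1) (by omega))).le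
        positivity
      have hγk : γlow ≤ γ (k + 1) := hγ (k + 1) (by omega)
      have h2 : γlow / 4 * Δ (k + 1) ^ 2 ≤ γ (k + 1) / 4 * Δ (k + 1) ^ 2 := by
        nlinarith [sq_nonneg (Δ (k + 1))]
      have h3 : γlow / 4 * Δ (k + 1) ^ 2 ≤ Q k - Q (k + 1) := by
        show γlow / 4 * Δ (k + 1) ^ 2 ≤ P (k + 1) - P (k + 1 + 1)
        clear_value Δ P
        linarith
      rw [div_mul_eq_mul_div, le_div_iff₀ hγlow]
      clear_value Δ P Q
      linarith
    have hglim : Filter.Tendsto (fun k => 4 / γlow * (Q k - Q (k + 1)))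
        Filter.atTop (nhds 0) := by
      have := hDlim.const_mul (4 / γlow)
      simpa using this
    exact squeeze_zero (fun k => sq_nonneg _) hbd hglim
  have hΔshift : Filter.Tendsto (fun k => Δ (k + 1)) Filter.atTop (nhds 0) := by
    have h : Filter.Tendsto (fun k => Real.sqrt (Δ (k + 1) ^ 2)) Filter.atTop
        (nhds (Real.sqrt 0)) := (Real.continuous_sqrt.tendsto 0).comp hsq
    rw [Real.sqrt_zero] at h
    exact h.congr fun k => Real.sqrt_sq (hΔnonneg _)
  have hΔlim : Filter.Tendsto Δ Filter.atTop (nhds 0) :=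
    (Filter.tendsto_add_atTop_iff_nat 1).mp hΔshift
  refine ⟨hΔlim, ?_⟩
  -- the combined residual goes to zero
  set G : EuclideanSpace ℝ (Fin n) × EuclideanSpace ℝ (Fin m) → EuclideanSpace ℝ (Fin n) :=
    fun p => gradient f p.1 +
      ContinuousLinearMap.adjoint (fderiv ℝ F p.1) (p.2 + ρ • F p.1) with hGdef
  set g : ℕ → ℝ := fun k =>
    Real.sqrt (‖G (x k, lam k)‖ ^ 2 + ‖F (x k)‖ ^ 2) with hgdef
  have hglim : Filter.Tendsto g Filter.atTop (nhds 0) := by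
    have hΔprev : Filter.Tendsto (fun k => Δ (k - 1)) Filter.atTop (nhds 0) :=
      hΔlim.comp (Filter.tendsto_sub_atTop_nat 1)
    have hrhs : Filter.Tendsto (fun k => Γ * (Δ k + Δ (k - 1))) Filter.atTop (nhds 0) := by
      have := (hΔlim.add hΔprev).const_mul Γ
      simpa using this
    refine squeeze_zero' (Filter.Eventually.of_forall fun k => Real.sqrt_nonneg _)
      ?_ hrhs
    filter_upwards [Filter.eventually_atTop.mpr ⟨2, fun k hk => hk⟩] with k hk
    exact hgradbound k hk
  have hFlim : Filter.Tendsto (fun k => F (x k)) Filter.atTop (nhds 0) := by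
    rw [tendsto_zero_iff_norm_tendsto_zero]
    refine squeeze_zero (fun k => norm_nonneg _) (fun k => ?_) hglim
    calc ‖F (x k)‖ = Real.sqrt (‖F (x k)‖ ^ 2) := (Real.sqrt_sq (norm_nonneg _)).symm
      _ ≤ g k := Real.sqrt_le_sqrt (by nlinarith [sq_nonneg ‖G (x k, lam k)‖])
  have hGlim : Filter.Tendsto (fun k => G (x k, lam k)) Filter.atTop (nhds 0) := by
    rw [tendsto_zero_iff_norm_tendsto_zero]
    refine squeeze_zero (fun k => norm_nonneg _) (fun k => ?_) hglim
    calc ‖G (x k, lam k)‖ = Real.sqrt (‖G (x k, lam k)‖ ^ 2) :=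
        (Real.sqrt_sq (norm_nonneg _)).symm
      _ ≤ g k := Real.sqrt_le_sqrt (by nlinarith [sq_nonneg ‖F (x k)‖])
  -- continuity of G
  have hFc : Continuous F := hF.continuous
  have hgrad : Continuous fun y => gradient f y := by
    unfold gradient
    exact (LinearIsometryEquiv.continuous _).comp (hf.continuous_fderiv one_ne_zero)
  have hadj : Continuous fun y => ContinuousLinearMap.adjoint (fderiv ℝ F y) :=
    (LinearIsometryEquiv.continuous _).comp (hF.continuous_fderiv one_ne_zero)
  have hGc : Continuous G := by
    refine (hgrad.comp continuous_fst).add ?_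
    exact (hadj.comp continuous_fst).clm_apply
      (continuous_snd.add ((hFc.comp continuous_fst).const_smul ρ))
  rintro xs lams ⟨φ, hφ, hφ1, htend⟩
  have hφtop : Filter.Tendsto φ Filter.atTop Filter.atTop := hφ.tendsto_atTop
  -- F xs = 0
  have hx : Filter.Tendsto (fun k => x (φ k)) Filter.atTop (nhds xs) :=
    (continuous_fst.tendsto (xs, lams)).comp htend
  have hFxs : F xs = 0 := by
    have h1 : Filter.Tendsto (fun k => F (x (φ k))) Filter.atTop (nhds (F xs)) :=
      (hFc.tendsto xs).comp hx
    have h2 : Filter.Tendsto (fun k => F (x (φ k))) Filter.atTop (nhds 0) :=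
      hFlim.comp hφtop
    exact tendsto_nhds_unique h1 h2
  have hGxs : G (xs, lams) = 0 := by
    have h1 : Filter.Tendsto (fun k => G (x (φ k), lam (φ k))) Filter.atTop
        (nhds (G (xs, lams))) := (hGc.tendsto (xs, lams)).comp htend
    have h2 : Filter.Tendsto (fun k => G (x (φ k), lam (φ k))) Filter.atTop (nhds 0) :=
      hGlim.comp hφtop
    exact tendsto_nhds_unique h1 h2
  refine ⟨?_, hFxs⟩
  have : gradient f xs +
      ContinuousLinearMap.adjoint (fderiv ℝ F xs) (lams + ρ • F xs) = 0 := hGxs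
  rwa [hFxs, smul_zero, add_zero] at this
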